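/- In the quotient ring R = \mathbb{Q}[y1,y2,Y1,Y2]/(y1 Y1 - 1, y2 Y2 - 1, D1, D2), where w = 2 y1 + 2 y2 + 2 Y1 + 2 Y2 + y1 Y2 + y2 Y1 + y1 y2 + Y1 Y2 and D1 = y1 \partial_{y1} w - Y1 \partial_{Y1} w, D2 = y2 \partial_{y2} w - Y2 \partial_{Y2} w (derivatives taken in the polynomial ring before quotienting), the element w satisfies (w - 12)(w + 4) = 0. -/

import Mathlib

open MvPolynomial

/-- The potential `w = 2y₁ + 2y₂ + 2Y₁ + 2Y₂ + y₁Y₂ + y₂Y₁ + y₁y₂ + Y₁Y₂` with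
`X 0 = y₁`, `X 1 = y₂`, `X 2 = Y₁`, `X 3 = Y₂`. -/
noncomputable def wBl5 : MvPolynomial (Fin 4) ℚ :=
  2 * X 0 + 2 * X 1 + 2 * X 2 + 2 * X 3 + X 0 * X 3 + X 1 * X 2 + X 0 * X 1 + X 2 * X 3

/-- The logarithmic critical point equation `D1 = y₁ ∂_{y₁} w - Y₁ ∂_{Y₁} w`. -/
noncomputable def D1Bl5 : MvPolynomial (Fin 4) ℚ :=
  X 0 * pderiv (0 : Fin 4) wBl5 - X 2 * pderiv (2 : Fin 4) wBl5

/-- The logarithmic critical point equation `D2 = y₂ ∂_{y₂} w - Y₂ ∂_{Y₂} w`. -/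
noncomputable def D2Bl5 : MvPolynomial (Fin 4) ℚ :=
  X 1 * pderiv (1 : Fin 4) wBl5 - X 3 * pderiv (3 : Fin 4) wBl5

/-- The ideal of relations for the Jacobian ring of the degree-four del Pezzo. -/
noncomputable def jacIdealBl5 : Ideal (MvPolynomial (Fin 4) ℚ) :=
  Ideal.span {X 0 * X 2 - 1, X 1 * X 3 - 1, D1Bl5, D2Bl5}


lemma pderiv_two (i : Fin 4) : pderiv i (2 : MvPolynomial (Fin 4) ℚ) = 0 := by
  have : (2 : MvPolynomial (Fin 4) ℚ) = C 2 := by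
    rw [map_ofNat]
  rw [this, pderiv_C]

lemma D1Bl5_eq : D1Bl5 = X 0 * (2 + X 3 + X 1) - X 2 * (2 + X 1 + X 3) := by
  have h0 : pderiv (0 : Fin 4) wBl5 = 2 + X 3 + X 1 := by
    simp [wBl5, pderiv_X, pderiv_two]
  have h2 : pderiv (2 : Fin 4) wBl5 = 2 + X 1 + X 3 := by
    simp [wBl5, pderiv_X, pderiv_two]
  rw [D1Bl5, h0, h2]

lemma D2Bl5_eq : D2Bl5 = X 1 * (2 + X 2 + X 0) - X 3 * (2 + X 0 + X 2) := by
  have h1 : pderiv (1 : Fin 4) wBl5 = 2 + X 2 + X 0 := by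
    simp [wBl5, pderiv_X, pderiv_two]
  have h3 : pderiv (3 : Fin 4) wBl5 = 2 + X 0 + X 2 := by
    simp [wBl5, pderiv_X, pderiv_two]
  rw [D2Bl5, h1, h3]

lemma key_decomp :
    (wBl5 - 12) * (wBl5 + 4) =
      (16 + 16 * X 3 + 4 * X 3 ^ 2 + 16 * X 1 + 8 * X 1 * X 3 + 4 * X 1 ^ 2) *
          (X 0 * X 2 - 1) +
        (32 + 16 * X 2 + 16 * X 0) * (X 1 * X 3 - 1) +
        (-2 * X 2 - X 2 * X 3 - X 1 * X 2 + 2 * X 0 + X 0 * X 3 + X 0 * X 1) * D1Bl5 +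
        (-4 * X 3 + 4 * X 1) * D2Bl5 := by
  rw [D1Bl5_eq, D2Bl5_eq, wBl5]
  ring

/-- In the Jacobian ring `ℚ[y₁,y₂,Y₁,Y₂]/(y₁Y₁-1, y₂Y₂-1, D1, D2)` of the disk potential
of `Bl⁵ℙ²`, the element `w` satisfies `(w - 12)(w + 4) = 0`. -/
theorem jacobian_relation_Bl5P2 :
    (Ideal.Quotient.mk jacIdealBl5 wBl5 - 12) *
        (Ideal.Quotient.mk jacIdealBl5 wBl5 + 4) = 0 := by
  have h : (Ideal.Quotient.mk jacIdealBl5) ((wBl5 - 12) * (wBl5 + 4)) = 0 := by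
    rw [Ideal.Quotient.eq_zero_iff_mem, key_decomp]
    refine Ideal.add_mem _ (Ideal.add_mem _ (Ideal.add_mem _ ?_ ?_) ?_) ?_ <;>
      refine Ideal.mul_mem_left _ _ (Ideal.subset_span ?_) <;> simp [jacIdealBl5]
  have e12 : (Ideal.Quotient.mk jacIdealBl5 (12 : MvPolynomial (Fin 4) ℚ)) = 12 := map_ofNat _ 12
  have e4 : (Ideal.Quotient.mk jacIdealBl5 (4 : MvPolynomial (Fin 4) ℚ)) = 4 := map_ofNat _ 4
  simpa [e12, e4] using h
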